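/- arXiv:1909.07525 — 2 statements merged into one kernel-verified Lean document; each statement's English description precedes it below -/
import Mathlib

section
/- Let (μ_t)_{t∈[0,T]} be a family of finite nonnegative Radon measures on X, weakly continuous in t, with supp μ_t ⊂ 𝕋^d × B_{P_T}(0) × [θ_m^0, θ_M^0] for all t ∈ [0,T], where P_T > 0 and 0 < θ_m^0 ≤ θ_M^0. Let (x_μ(t), v_μ(t), θ_μ(t)) be a C^1 solution on [0,T] of the characteristic system dx_μ/dt = v_μ, dv_μ/dt = F[μ_t](x_μ, v_μ, θ_μ), dθ_μ/dt = G[μ_t](x_μ, θ_μ), with θ_μ(t) > 0 and initial temperature θ_μ(0) ∈ [θ_m^0, θ_M^0]. Then the temperature component satisfies θ_μ(t) ≥ θ_m^0 for all t ∈ [0,T]. -/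
open MeasureTheory Set
open scoped Topology NNReal

noncomputable section

instance factZeroLtOne' : Fact ((0:ℝ) < 1) := ⟨zero_lt_one⟩

/-- The `d`-dimensional torus `𝕋^d = ℝ^d / ℤ^d`. -/
abbrev Td (d : ℕ) := Fin d → AddCircle (1 : ℝ)

/-- The velocity space `ℝ^d` with the Euclidean norm. -/
abbrev Vd (d : ℕ) := EuclideanSpace ℝ (Fin d)

/-- The phase space `X = 𝕋^d × ℝ^d × ℝ` (the temperature variable `θ` is modelled as a real
number; positivity of `θ` is imposed through support conditions). -/
abbrev Xd (d : ℕ) := Td d × Vd d × ℝ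

/-- The canonical projection `ℝ^d → 𝕋^d`. -/
def projT (d : ℕ) (y : Vd d) : Td d := fun i => (y i : AddCircle (1 : ℝ))

variable {d : ℕ}

/-- The alignment force `F[μ](x,v,θ) = ∫ φ(x_* - x) (v_*/θ_* - v/θ) dμ(z_*)`. -/
def Fker (φ : Td d → ℝ) (μ : Measure (Xd d)) (x : Td d) (v : Vd d) (θ : ℝ) : Vd d :=
  ∫ z, φ (z.1 - x) • ((z.2.2)⁻¹ • z.2.1 - θ⁻¹ • v) ∂μ

/-- The temperature interaction `G[μ](x,θ) = ∫ ζ(x_* - x) (1/θ - 1/θ_*) dμ(z_*)`. -/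
def Gker (ζ : Td d → ℝ) (μ : Measure (Xd d)) (x : Td d) (θ : ℝ) : ℝ :=
  ∫ z, ζ (z.1 - x) * (θ⁻¹ - (z.2.2)⁻¹) ∂μ

/-- The bounded Lipschitz distance between two measures on `X`. -/
def blDist (μ ν : Measure (Xd d)) : ℝ :=
  sSup {r | ∃ g : Xd d → ℝ, (∀ z, |g z| ≤ 1) ∧ LipschitzWith 1 g ∧
    r = |(∫ z, g z ∂μ) - ∫ z, g z ∂ν|}

/-- `supp μ ⊆ 𝕋^d × B_P(0) × [θm, θM]`. -/
def SuppIn (μ : Measure (Xd d)) (P θm θM : ℝ) : Prop :=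
  μ {z : Xd d | ¬(‖z.2.1‖ ≤ P ∧ z.2.2 ∈ Icc θm θM)} = 0

/-- `(μ t)_{t ∈ [0,T]}` is a measure-valued solution of the kinetic thermomechanical
Cucker–Smale equation: each `μ t` is a finite measure, `t ↦ ∫ g dμ_t` is continuous for
`g ∈ C_0(X)`, and the weak formulation holds for all test functions `g ∈ C_0^1([0,T) × X)`
(C¹-regularity on the torus is expressed through the lift along `projT`, and the transport
term `∂_s g + v·∇_x g + F[μ_s]·∇_v g + G[μ_s] ∂_θ g` is expressed as the derivative of `g`
along the characteristic direction, which agrees with it by the chain rule). -/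
def IsMVSol (φ ζ : Td d → ℝ) (T : ℝ) (μ : ℝ → Measure (Xd d)) : Prop :=
  (∀ t ∈ Icc (0:ℝ) T, IsFiniteMeasure (μ t)) ∧
  (∀ g : Xd d → ℝ, Continuous g → HasCompactSupport g →
     (∀ z : Xd d, z.2.2 ≤ 0 → g z = 0) →
     ContinuousOn (fun t => ∫ z, g z ∂(μ t)) (Icc 0 T)) ∧
  (∀ g : ℝ → Xd d → ℝ,
     ContDiff ℝ 1 (fun p : ℝ × Vd d × Vd d × ℝ =>
        g p.1 (projT d p.2.1, p.2.2.1, p.2.2.2)) →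
     HasCompactSupport (Function.uncurry g) →
     (∀ s, T ≤ s → ∀ z, g s z = 0) →
     (∀ s, ∀ z : Xd d, z.2.2 ≤ 0 → g s z = 0) →
     ∀ t ∈ Icc (0:ℝ) T,
       (∫ z, g t z ∂(μ t)) - ∫ z, g 0 z ∂(μ 0) =
       ∫ s in (0:ℝ)..t, ∫ z, deriv (fun a : ℝ =>
           g (s + a) (z.1 + projT d (a • z.2.1),
             z.2.1 + a • Fker φ (μ s) z.1 z.2.1 z.2.2,
             z.2.2 + a • Gker ζ (μ s) z.1 z.2.2)) 0 ∂(μ s))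

/-- `(projT d ∘ y, v, θc)` is a characteristic curve of the kinetic TCS equation associated
with the family `(μ t)` on `[0,T]`: it solves `ẋ = v`, `v̇ = F[μ_t](x,v,θ)`,
`θ̇ = G[μ_t](x,θ)`. The torus component is represented through its lift `y : ℝ → ℝ^d`. -/
def IsCharOn {d : ℕ} (φ ζ : Td d → ℝ) (μ : ℝ → Measure (Xd d)) (T : ℝ)
    (y v : ℝ → Vd d) (θc : ℝ → ℝ) : Prop :=
  ∀ t ∈ Icc (0:ℝ) T,
    HasDerivAt y (v t) t ∧
    HasDerivAt v (Fker φ (μ t) (projT d (y t)) (v t) (θc t)) t ∧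
    HasDerivAt θc (Gker ζ (μ t) (projT d (y t)) (θc t)) t

/-- `z` belongs to the support of the measure `μ`. -/
def memSupp {d : ℕ} (μ : Measure (Xd d)) (z : Xd d) : Prop :=
  ∀ U : Set (Xd d), IsOpen U → z ∈ U → 0 < μ U

lemma Gker_nonneg_aux {d : ℕ} (ζ : Td d → ℝ) (hζ0 : ∀ x, 0 ≤ ζ x)
    (μ : Measure (Xd d)) (P θm θM : ℝ) (hs : SuppIn μ P θm θM)
    (x : Td d) (θ : ℝ) (hθ : 0 < θ) (hθm : θ ≤ θm) :
    0 ≤ Gker ζ μ x θ := by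
  refine integral_nonneg_of_ae ?_
  have h : ∀ᵐ z ∂μ, ‖z.2.1‖ ≤ P ∧ z.2.2 ∈ Icc θm θM := by
    rw [MeasureTheory.ae_iff]; exact hs
  filter_upwards [h] with z hz
  have h1 : z.2.2⁻¹ ≤ θ⁻¹ := inv_anti₀ hθ (le_trans hθm hz.2.1)
  exact mul_nonneg (hζ0 _) (sub_nonneg.2 h1)

/-- lower bound on the temperature along characteristics: if the family
`(μ_t)` of finite measures is weakly continuous in time and uniformly compactly supported
with temperature support in `[θ_m^0, θ_M^0]`, then any characteristic curve with positive
temperature and initial temperature in `[θ_m^0, θ_M^0]` satisfies `θ_μ(t) ≥ θ_m^0` on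
`[0,T]`. -/
theorem characteristic_temperature_lower_bound
    (d : ℕ) (φ ζ : Td d → ℝ)
    (hφ0 : ∀ x, 0 ≤ φ x) (hζ0 : ∀ x, 0 ≤ ζ x)
    (hφL : ∃ K : ℝ≥0, LipschitzWith K φ) (hζL : ∃ K : ℝ≥0, LipschitzWith K ζ)
    (T : ℝ) (hT : 0 < T)
    (P θm θM : ℝ) (hP : 0 < P) (hθm : 0 < θm) (hθmM : θm ≤ θM)
    (μ : ℝ → Measure (Xd d))
    (hfin : ∀ t ∈ Icc (0:ℝ) T, IsFiniteMeasure (μ t))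
    (hwc : ∀ g : Xd d → ℝ, Continuous g → HasCompactSupport g →
      (∀ z : Xd d, z.2.2 ≤ 0 → g z = 0) →
      ContinuousOn (fun t => ∫ z, g z ∂(μ t)) (Icc 0 T))
    (hsμ : ∀ t ∈ Icc (0:ℝ) T, SuppIn (μ t) P θm θM)
    (y v : ℝ → Vd d) (θc : ℝ → ℝ)
    (hchar : IsCharOn φ ζ μ T y v θc)
    (hθpos : ∀ t ∈ Icc (0:ℝ) T, 0 < θc t)
    (hθ0 : θc 0 ∈ Icc θm θM) :
    ∀ t ∈ Icc (0:ℝ) T, θm ≤ θc t := by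
  intro t ht
  by_contra hlt
  push_neg at hlt
  have hcont : ContinuousOn θc (Icc 0 T) := fun s hs =>
    ((hchar s hs).2.2.continuousAt).continuousWithinAt
  have hsubT : Icc (0:ℝ) t ⊆ Icc 0 T := Icc_subset_Icc le_rfl ht.2
  set S : Set ℝ := Icc 0 t ∩ θc ⁻¹' Iic (θc t) with hS
  have hSne : S.Nonempty := ⟨t, ⟨ht.1, le_rfl⟩, mem_preimage.2 (mem_Iic.2 le_rfl)⟩
  have hSbdd : BddBelow S := ⟨0, fun s hs => hs.1.1⟩
  have hSclosed : IsClosed S :=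
    (hcont.mono hsubT).preimage_isClosed_of_isClosed isClosed_Icc isClosed_Iic
  set t1 := sInf S with ht1def
  have ht1S : t1 ∈ S := hSclosed.csInf_mem hSne hSbdd
  have ht1t : t1 ∈ Icc 0 t := ht1S.1
  have ht1T : t1 ∈ Icc 0 T := hsubT ht1t
  have ht1c : θc t1 ≤ θc t := ht1S.2
  have ht1pos : 0 < t1 := by
    rcases ht1t.1.lt_or_eq with h | h
    · exact h
    · exfalso
      have h0 : θm ≤ θc t1 := by rw [← h]; exact hθ0.1
      exact absurd (h0.trans ht1c) (not_le.2 hlt)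
  have hca : ContinuousAt θc t1 := (hchar t1 ht1T).2.2.continuousAt
  have hlt1 : θc t1 < θm := lt_of_le_of_lt ht1c hlt
  have hev : ∀ᶠ s in 𝓝 t1, θc s < θm := hca (Iio_mem_nhds hlt1)
  obtain ⟨δ, hδpos, hδ⟩ := Metric.eventually_nhds_iff.1 hev
  set δ' := min (δ / 2) t1 with hδ'def
  have hδ'pos : 0 < δ' := lt_min (half_pos hδpos) ht1pos
  have hδ't1 : δ' ≤ t1 := min_le_right _ _
  have hIsub : Icc (t1 - δ') t1 ⊆ Icc 0 t := fun s hs =>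
    ⟨le_trans (sub_nonneg.2 hδ't1) hs.1, hs.2.trans ht1t.2⟩
  have hIsmall : ∀ s ∈ Icc (t1 - δ') t1, θc s < θm := by
    intro s hs
    apply hδ
    rw [Real.dist_eq, abs_sub_lt_iff]
    constructor
    · linarith [hs.2, hδpos]
    · have := hs.1
      have h2 : δ' ≤ δ / 2 := min_le_left _ _
      linarith
  have hderiv : ∀ s ∈ Icc (t1 - δ') t1,
      HasDerivAt θc (Gker ζ (μ s) (projT d (y s)) (θc s)) s :=
    fun s hs => (hchar s (hsubT (hIsub hs))).2.2
  have hmono : MonotoneOn θc (Icc (t1 - δ') t1) := by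
    apply monotoneOn_of_deriv_nonneg (convex_Icc _ _)
    · exact fun s hs => (hderiv s hs).continuousAt.continuousWithinAt
    · intro s hs
      rw [interior_Icc] at hs
      exact (hderiv s (Ioo_subset_Icc_self hs)).differentiableAt.differentiableWithinAt
    · intro s hs
      rw [interior_Icc] at hs
      have hs' := Ioo_subset_Icc_self hs
      rw [(hderiv s hs').deriv]
      exact Gker_nonneg_aux ζ hζ0 (μ s) P θm θM (hsμ s (hsubT (hIsub hs'))) _ _
        (hθpos s (hsubT (hIsub hs'))) (le_of_lt (hIsmall s hs'))
  have hmemI : t1 - δ' ∈ Icc (t1 - δ') t1 := ⟨le_rfl, by linarith⟩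
  have hle : θc (t1 - δ') ≤ θc t1 :=
    hmono hmemI ⟨by linarith, le_rfl⟩ (by linarith)
  have hnotS : t1 - δ' ∉ S := fun hmem =>
    absurd (csInf_le hSbdd hmem) (not_le.2 (by linarith))
  have : θc t < θc (t1 - δ') := by
    by_contra hc
    push_neg at hc
    exact hnotS ⟨hIsub hmemI, hc⟩
  linarith
end
end

section
/- Let μ and ν be finite nonnegative Radon measures on X whose supports are contained in 𝕋^d × B_{P_T}(0) × [θ_m^0, θ_M^0], where P_T > 0 and 0 < θ_m^0 ≤ θ_M^0. Define a(x,μ) = ∫_X φ(x_*−x)(v_*/θ_*) dμ(z_*). Then for every x ∈ 𝕋^d, |a(x,μ) − a(x,ν)| ≤ max{ ‖φ‖_{L^∞} P_T/θ_m^0 , ‖φ‖_{Lip} P_T/θ_m^0 + ‖φ‖_{L^∞}/θ_m^0 + ‖φ‖_{L^∞} P_T/(θ_m^0)^2 } · d(μ,ν), where ‖φ‖_{Lip} denotes the Lipschitz constant of φ. -/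
open MeasureTheory Set
open scoped Topology NNReal

noncomputable section

variable {d : ℕ}

/-- `a(x,μ) = ∫ φ(x_* - x) (v_*/θ_*) dμ(z_*)`. -/
def aker {d : ℕ} (φ : Td d → ℝ) (μ : Measure (Xd d)) (x : Td d) : Vd d :=
  ∫ z, φ (z.1 - x) • ((z.2.2)⁻¹ • z.2.1) ∂μ

/-- `b(x,μ) = ∫ ζ(x_* - x) (1/θ_*) dμ(z_*)`. -/
def bker {d : ℕ} (ζ : Td d → ℝ) (μ : Measure (Xd d)) (x : Td d) : ℝ :=
  ∫ z, ζ (z.1 - x) * (z.2.2)⁻¹ ∂μ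

/-- `ρ_φ(x,μ) = ∫ φ(x_* - x) dμ(z_*)`. -/
def rker {d : ℕ} (φ : Td d → ℝ) (μ : Measure (Xd d)) (x : Td d) : ℝ :=
  ∫ z, φ (z.1 - x) ∂μ


/-! ### Auxiliary lemmas for `aker_stability` -/

lemma clamp_abs_sub_le (c e a b : ℝ) :
    |min c (max e a) - min c (max e b)| ≤ |a - b| := by
  have h1 := abs_min_sub_min_le_max c (max e a) c (max e b)
  have h2 := abs_max_sub_max_le_max e a e b
  rw [sub_self, abs_zero, max_eq_right (abs_nonneg (max e a - max e b))] at h1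
  rw [sub_self, abs_zero, max_eq_right (abs_nonneg (a - b))] at h2
  exact h1.trans h2

lemma clamp_mem_Icc {e c : ℝ} (h : e ≤ c) (a : ℝ) : min c (max e a) ∈ Icc e c :=
  ⟨le_min h (le_max_left _ _), min_le_left _ _⟩

lemma inv_clamp_sub_le {e c : ℝ} (he : 0 < e) (hec : e ≤ c) (a b : ℝ) :
    |(min c (max e a))⁻¹ - (min c (max e b))⁻¹| ≤ e⁻¹ * e⁻¹ * |a - b| := by
  set a' := min c (max e a) with ha'
  set b' := min c (max e b) with hb'
  have ha : e ≤ a' := (clamp_mem_Icc hec a).1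
  have hb : e ≤ b' := (clamp_mem_Icc hec b).1
  have ha0 : 0 < a' := he.trans_le ha
  have hb0 : 0 < b' := he.trans_le hb
  have key : a'⁻¹ - b'⁻¹ = (b' - a') / (a' * b') := by field_simp
  rw [key, abs_div, abs_mul]
  have h1 : |b' - a'| ≤ |a - b| := by
    rw [abs_sub_comm]; exact clamp_abs_sub_le c e a b
  have h2 : e * e ≤ |a'| * |b'| := by
    have := mul_le_mul (ha.trans (le_abs_self _)) (hb.trans (le_abs_self _)) he.le (abs_nonneg _)
    linarith
  calc |b' - a'| / (|a'| * |b'|) ≤ |a - b| / (e * e) :=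
        div_le_div₀ (abs_nonneg _) h1 (by positivity) h2
    _ = e⁻¹ * e⁻¹ * |a - b| := by field_simp

lemma abs_triple_prod_sub (a1 a2 a3 b1 b2 b3 : ℝ) :
    |a1 * a2 * a3 - b1 * b2 * b3| ≤
      |a1 - b1| * |a2| * |a3| + |b1| * |a2 - b2| * |a3| + |b1| * |b2| * |a3 - b3| := by
  have h : a1 * a2 * a3 - b1 * b2 * b3 =
      (a1 - b1) * a2 * a3 + b1 * (a2 - b2) * a3 + b1 * b2 * (a3 - b3) := by ring
  rw [h]
  refine (abs_add_three _ _ _).trans_eq ?_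
  rw [abs_mul, abs_mul, abs_mul, abs_mul, abs_mul, abs_mul]

lemma blDist_bddAbove {d : ℕ} (μ ν : Measure (Xd d)) [IsFiniteMeasure μ] [IsFiniteMeasure ν] :
    BddAbove {r | ∃ g : Xd d → ℝ, (∀ z, |g z| ≤ 1) ∧ LipschitzWith 1 g ∧
      r = |(∫ z, g z ∂μ) - ∫ z, g z ∂ν|} := by
  refine ⟨(μ univ).toReal + (ν univ).toReal, ?_⟩
  rintro r ⟨g, hb, _, rfl⟩
  have h1 : ‖∫ z, g z ∂μ‖ ≤ 1 * (μ univ).toReal :=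
    norm_integral_le_of_norm_le_const (Filter.Eventually.of_forall fun z => by
      rw [Real.norm_eq_abs]; exact hb z)
  have h2 : ‖∫ z, g z ∂ν‖ ≤ 1 * (ν univ).toReal :=
    norm_integral_le_of_norm_le_const (Filter.Eventually.of_forall fun z => by
      rw [Real.norm_eq_abs]; exact hb z)
  simp only [Real.norm_eq_abs, one_mul] at h1 h2
  calc |(∫ z, g z ∂μ) - ∫ z, g z ∂ν| ≤ |∫ z, g z ∂μ| + |∫ z, g z ∂ν| := abs_sub _ _
    _ ≤ (μ univ).toReal + (ν univ).toReal := add_le_add h1 h2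

lemma le_blDist {d : ℕ} (μ ν : Measure (Xd d)) [IsFiniteMeasure μ] [IsFiniteMeasure ν]
    (g : Xd d → ℝ) (hb : ∀ z, |g z| ≤ 1) (hl : LipschitzWith 1 g) :
    |(∫ z, g z ∂μ) - ∫ z, g z ∂ν| ≤ blDist μ ν :=
  le_csSup (blDist_bddAbove μ ν) ⟨g, hb, hl, rfl⟩

lemma blDist_nonneg {d : ℕ} (μ ν : Measure (Xd d)) [IsFiniteMeasure μ] [IsFiniteMeasure ν] :
    0 ≤ blDist μ ν := by
  have := le_blDist μ ν (fun _ => 0) (fun z => by simp)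
    ((LipschitzWith.const 0).weaken zero_le_one)
  simpa using this

/-- stability of `a(x,·)` with respect to the input measure in the
bounded Lipschitz distance, with the explicit constant
`max{‖φ‖_∞ P/θ_m, ‖φ‖_Lip P/θ_m + ‖φ‖_∞/θ_m + ‖φ‖_∞ P/θ_m²}`. -/
theorem aker_stability
    (d : ℕ) (φ : Td d → ℝ) (hφ0 : ∀ x, 0 ≤ φ x)
    (Mφ Lφ : ℝ) (hM : ∀ x, |φ x| ≤ Mφ) (hLnn : 0 ≤ Lφ)
    (hL : LipschitzWith (Real.toNNReal Lφ) φ)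
    (P θm θM : ℝ) (hP : 0 < P) (hθm : 0 < θm) (hθmM : θm ≤ θM)
    (μ ν : Measure (Xd d)) [IsFiniteMeasure μ] [IsFiniteMeasure ν]
    (hsμ : SuppIn μ P θm θM) (hsν : SuppIn ν P θm θM) :
    ∀ x : Td d,
      ‖aker φ μ x - aker φ ν x‖ ≤
        max (Mφ * P / θm) (Lφ * P / θm + Mφ / θm + Mφ * P / θm ^ 2) * blDist μ ν  := by
  intro x
  classical
  set C2 := Lφ * P / θm + Mφ / θm + Mφ * P / θm ^ 2 with hC2
  set C := max (Mφ * P / θm) C2 with hCdef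
  have hMφ0 : 0 ≤ Mφ := (abs_nonneg _).trans (hM (fun _ => 0))
  have hC0 : 0 ≤ C := le_max_of_le_left (by positivity)
  have hbl0 : 0 ≤ blDist μ ν := blDist_nonneg μ ν
  set A := aker φ μ x - aker φ ν x with hA
  by_cases hA0 : A = 0
  · rw [hA0, norm_zero]; exact mul_nonneg hC0 hbl0
  have hMφpos : 0 < Mφ := by
    rcases hMφ0.lt_or_eq with h | h
    · exact h
    · exfalso; apply hA0
      have hφz : ∀ y, φ y = 0 := fun y =>
        abs_eq_zero.mp (le_antisymm (by rw [h]; exact hM y) (abs_nonneg _))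
      have hz : ∀ (κ : Measure (Xd d)), aker φ κ x = 0 := fun κ => by
        simp [aker, hφz]
      rw [hA, hz μ, hz ν, sub_zero]
  have hCpos : 0 < C := lt_max_of_lt_left (by positivity)
  set u : Vd d := ‖A‖⁻¹ • A with hu
  have hunorm : ‖u‖ = 1 := by
    have := norm_smul_inv_norm (𝕜 := ℝ) hA0
    simpa using this
  have hφc : Continuous φ := hL.continuous
  set f3 : Xd d → ℝ := fun z => min P (max (-P) (inner ℝ z.2.1 u)) with hf3
  set fz : Xd d → ℝ := fun z => φ (z.1 - x) * (min θM (max θm z.2.2))⁻¹ * f3 z with hfz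
  have hb1 : ∀ z : Xd d, |φ (z.1 - x)| ≤ Mφ := fun z => hM _
  have hb2 : ∀ z : Xd d, |(min θM (max θm z.2.2))⁻¹| ≤ θm⁻¹ := by
    intro z
    have h := clamp_mem_Icc hθmM z.2.2
    have h0 : 0 < min θM (max θm z.2.2) := hθm.trans_le h.1
    rw [abs_of_pos (inv_pos.mpr h0)]
    exact inv_anti₀ hθm h.1
  have hb3 : ∀ z : Xd d, |f3 z| ≤ P := by
    intro z
    have h2 : f3 z ≤ P := min_le_left _ _
    have h3 : -P ≤ f3 z := le_min (by linarith) (le_max_left _ _)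
    exact abs_le.mpr ⟨h3, h2⟩
  have hfzbound : ∀ z, |fz z| ≤ Mφ * P / θm := by
    intro z
    have h : |fz z| = |φ (z.1 - x)| * |(min θM (max θm z.2.2))⁻¹| * |f3 z| := by
      rw [← abs_mul, ← abs_mul]
    rw [h]
    calc |φ (z.1 - x)| * |(min θM (max θm z.2.2))⁻¹| * |f3 z|
        ≤ Mφ * θm⁻¹ * P :=
          mul_le_mul (mul_le_mul (hb1 z) (hb2 z) (abs_nonneg _) hMφ0) (hb3 z)
            (abs_nonneg _) (mul_nonneg hMφ0 (by positivity))
      _ = Mφ * P / θm := by ring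
  have hfzlip : ∀ z w : Xd d, |fz z - fz w| ≤ C2 * dist z w := by
    intro z w
    set D := dist z w with hD
    have hD0 : 0 ≤ D := dist_nonneg
    have hd1 : dist z.1 w.1 ≤ D := le_trans (le_max_left _ _) (le_of_eq (Prod.dist_eq).symm)
    have hd2 : dist z.2.1 w.2.1 ≤ D := by
      calc dist z.2.1 w.2.1 ≤ dist z.2 w.2 :=
            le_trans (le_max_left _ _) (le_of_eq (Prod.dist_eq).symm)
        _ ≤ D := le_trans (le_max_right _ _) (le_of_eq (Prod.dist_eq).symm)
    have hd3 : dist z.2.2 w.2.2 ≤ D := by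
      calc dist z.2.2 w.2.2 ≤ dist z.2 w.2 :=
            le_trans (le_max_right _ _) (le_of_eq (Prod.dist_eq).symm)
        _ ≤ D := le_trans (le_max_right _ _) (le_of_eq (Prod.dist_eq).symm)
    have e1 : |φ (z.1 - x) - φ (w.1 - x)| ≤ Lφ * D := by
      have hlip := hL.dist_le_mul (z.1 - x) (w.1 - x)
      rw [dist_sub_right] at hlip
      rw [Real.coe_toNNReal Lφ hLnn] at hlip
      calc |φ (z.1 - x) - φ (w.1 - x)| = dist (φ (z.1 - x)) (φ (w.1 - x)) := by
            rw [Real.dist_eq]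
        _ ≤ Lφ * dist z.1 w.1 := hlip
        _ ≤ Lφ * D := mul_le_mul_of_nonneg_left hd1 hLnn
    have e2 : |(min θM (max θm z.2.2))⁻¹ - (min θM (max θm w.2.2))⁻¹| ≤ θm⁻¹ * θm⁻¹ * D := by
      calc |(min θM (max θm z.2.2))⁻¹ - (min θM (max θm w.2.2))⁻¹|
          ≤ θm⁻¹ * θm⁻¹ * |z.2.2 - w.2.2| := inv_clamp_sub_le hθm hθmM _ _
        _ = θm⁻¹ * θm⁻¹ * dist z.2.2 w.2.2 := by rw [Real.dist_eq]
        _ ≤ θm⁻¹ * θm⁻¹ * D := mul_le_mul_of_nonneg_left hd3 (by positivity)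
    have e3 : |f3 z - f3 w| ≤ D := by
      calc |f3 z - f3 w| ≤ |(inner ℝ z.2.1 u : ℝ) - inner ℝ w.2.1 u| :=
            clamp_abs_sub_le P (-P) _ _
        _ = |(inner ℝ (z.2.1 - w.2.1) u : ℝ)| := by rw [inner_sub_left]
        _ ≤ ‖z.2.1 - w.2.1‖ * ‖u‖ := abs_real_inner_le_norm _ _
        _ = dist z.2.1 w.2.1 := by rw [hunorm, mul_one, dist_eq_norm]
        _ ≤ D := hd2
    have key := abs_triple_prod_sub (φ (z.1 - x)) ((min θM (max θm z.2.2))⁻¹) (f3 z)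
      (φ (w.1 - x)) ((min θM (max θm w.2.2))⁻¹) (f3 w)
    have hfzz : fz z = φ (z.1 - x) * (min θM (max θm z.2.2))⁻¹ * f3 z := rfl
    have hfzw : fz w = φ (w.1 - x) * (min θM (max θm w.2.2))⁻¹ * f3 w := rfl
    rw [hfzz, hfzw]
    have t1 : |φ (z.1 - x) - φ (w.1 - x)| * |(min θM (max θm z.2.2))⁻¹| * |f3 z|
        ≤ Lφ * D * θm⁻¹ * P :=
      mul_le_mul (mul_le_mul e1 (hb2 z) (abs_nonneg _) (mul_nonneg hLnn hD0)) (hb3 z)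
        (abs_nonneg _) (mul_nonneg (mul_nonneg hLnn hD0) (by positivity))
    have t2 : |φ (w.1 - x)| * |(min θM (max θm z.2.2))⁻¹ - (min θM (max θm w.2.2))⁻¹| * |f3 z|
        ≤ Mφ * (θm⁻¹ * θm⁻¹ * D) * P :=
      mul_le_mul (mul_le_mul (hb1 w) e2 (abs_nonneg _) hMφ0) (hb3 z)
        (abs_nonneg _) (mul_nonneg hMφ0 (mul_nonneg (by positivity) hD0))
    have t3 : |φ (w.1 - x)| * |(min θM (max θm w.2.2))⁻¹| * |f3 z - f3 w|
        ≤ Mφ * θm⁻¹ * D :=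
      mul_le_mul (mul_le_mul (hb1 w) (hb2 w) (abs_nonneg _) hMφ0) e3
        (abs_nonneg _) (mul_nonneg hMφ0 (by positivity))
    have final : Lφ * D * θm⁻¹ * P + Mφ * (θm⁻¹ * θm⁻¹ * D) * P + Mφ * θm⁻¹ * D = C2 * D := by
      rw [hC2]; field_simp; ring
    linarith
  set g : Xd d → ℝ := fun z => C⁻¹ * fz z with hg
  have hgb : ∀ z, |g z| ≤ 1 := by
    intro z
    have h : |g z| = C⁻¹ * |fz z| := by
      rw [show g z = C⁻¹ * fz z from rfl, abs_mul, abs_of_pos (inv_pos.mpr hCpos)]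
    rw [h]
    calc C⁻¹ * |fz z| ≤ C⁻¹ * C :=
          mul_le_mul_of_nonneg_left ((hfzbound z).trans (le_max_left _ _))
            (inv_pos.mpr hCpos).le
      _ = 1 := inv_mul_cancel₀ hCpos.ne'
  have hglip : LipschitzWith 1 g := by
    apply LipschitzWith.of_dist_le_mul
    intro z w
    have h : dist (g z) (g w) = C⁻¹ * |fz z - fz w| := by
      rw [show g z = C⁻¹ * fz z from rfl, show g w = C⁻¹ * fz w from rfl, Real.dist_eq,
        ← mul_sub, abs_mul, abs_of_pos (inv_pos.mpr hCpos)]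
    rw [h]
    have hC2C : C2 ≤ C := le_max_right _ _
    calc C⁻¹ * |fz z - fz w| ≤ C⁻¹ * (C2 * dist z w) :=
          mul_le_mul_of_nonneg_left (hfzlip z w) (inv_pos.mpr hCpos).le
      _ ≤ C⁻¹ * (C * dist z w) :=
          mul_le_mul_of_nonneg_left (mul_le_mul_of_nonneg_right hC2C dist_nonneg)
            (inv_pos.mpr hCpos).le
      _ = ↑(1 : ℝ≥0) * dist z w := by
          rw [← mul_assoc, inv_mul_cancel₀ hCpos.ne']; simp
  have key : ∀ (κ : Measure (Xd d)), IsFiniteMeasure κ → SuppIn κ P θm θM →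
      ∫ z, fz z ∂κ = (inner ℝ (aker φ κ x) u : ℝ) := by
    intro κ hκfin hκ
    haveI := hκfin
    have hae : ∀ᵐ z ∂κ, ‖z.2.1‖ ≤ P ∧ z.2.2 ∈ Icc θm θM := ae_iff.mpr hκ
    set F : Xd d → Vd d := fun z => φ (z.1 - x) • ((z.2.2)⁻¹ • z.2.1) with hF
    have hFmeas : AEStronglyMeasurable F κ := by
      apply Measurable.aestronglyMeasurable
      have h1 : Measurable fun z : Xd d => φ (z.1 - x) :=
        (hφc.comp (continuous_fst.sub continuous_const)).measurable
      have h2 : Measurable fun z : Xd d => (z.2.2)⁻¹ • z.2.1 :=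
        (measurable_snd.snd.inv).smul measurable_snd.fst
      exact h1.smul h2
    have hFint : Integrable F κ := by
      apply Integrable.mono' (integrable_const (Mφ * (θm⁻¹ * P))) hFmeas
      filter_upwards [hae] with z hz
      have hθ : θm ≤ z.2.2 := hz.2.1
      have hθ0 : 0 < z.2.2 := hθm.trans_le hθ
      have hinv : |z.2.2⁻¹| ≤ θm⁻¹ := by
        rw [abs_of_pos (inv_pos.mpr hθ0)]
        exact inv_anti₀ hθm hθ
      have hn : ‖F z‖ = |φ (z.1 - x)| * (|z.2.2⁻¹| * ‖z.2.1‖) := by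
        rw [show F z = φ (z.1 - x) • ((z.2.2)⁻¹ • z.2.1) from rfl, norm_smul, norm_smul,
          Real.norm_eq_abs, Real.norm_eq_abs]
      rw [hn]
      exact mul_le_mul (hM _)
        (mul_le_mul hinv hz.1 (norm_nonneg _) (by positivity))
        (mul_nonneg (abs_nonneg _) (norm_nonneg _)) hMφ0
    have haeq : ∀ᵐ z ∂κ, fz z = (inner ℝ (F z) u : ℝ) := by
      filter_upwards [hae] with z hz
      have hθl : θm ≤ z.2.2 := hz.2.1
      have hθr : z.2.2 ≤ θM := hz.2.2
      have hclamp : min θM (max θm z.2.2) = z.2.2 := by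
        rw [max_eq_right hθl, min_eq_right hθr]
      have hinner : |(inner ℝ z.2.1 u : ℝ)| ≤ P := by
        calc |(inner ℝ z.2.1 u : ℝ)| ≤ ‖z.2.1‖ * ‖u‖ := abs_real_inner_le_norm _ _
          _ ≤ P := by rw [hunorm, mul_one]; exact hz.1
      rw [abs_le] at hinner
      have hclamp3 : f3 z = inner ℝ z.2.1 u := by
        rw [show f3 z = min P (max (-P) (inner ℝ z.2.1 u)) from rfl,
          max_eq_right (by linarith [hinner.1]), min_eq_right hinner.2]
      rw [show fz z = φ (z.1 - x) * (min θM (max θm z.2.2))⁻¹ * f3 z from rfl,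
        hclamp, hclamp3,
        show F z = φ (z.1 - x) • ((z.2.2)⁻¹ • z.2.1) from rfl,
        real_inner_smul_left, real_inner_smul_left]
      ring
    rw [integral_congr_ae haeq]
    have hcomm : ∀ z, (inner ℝ (F z) u : ℝ) = inner ℝ u (F z) := fun z => real_inner_comm _ _
    simp_rw [hcomm]
    rw [integral_inner hFint u, real_inner_comm]
    congr 1
  have hμ := key μ inferInstance hsμ
  have hν := key ν inferInstance hsν
  have hnormA : ‖A‖ = (∫ z, fz z ∂μ) - ∫ z, fz z ∂ν := by
    have hAn : ‖A‖ ≠ 0 := norm_ne_zero_iff.mpr hA0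
    rw [hμ, hν, ← inner_sub_left, ← hA, hu, real_inner_smul_right,
      real_inner_self_eq_norm_mul_norm, ← mul_assoc, inv_mul_cancel₀ hAn, one_mul]
  have hint : ∀ (κ : Measure (Xd d)), ∫ z, fz z ∂κ = C * ∫ z, g z ∂κ := by
    intro κ
    have h : ∀ z, g z = C⁻¹ * fz z := fun z => rfl
    simp_rw [h]
    rw [integral_const_mul, ← mul_assoc, mul_inv_cancel₀ hCpos.ne', one_mul]
  rw [hnormA, hint μ, hint ν, ← mul_sub]
  calc C * ((∫ z, g z ∂μ) - ∫ z, g z ∂ν)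
      ≤ C * |(∫ z, g z ∂μ) - ∫ z, g z ∂ν| :=
        mul_le_mul_of_nonneg_left (le_abs_self _) hC0
    _ ≤ C * blDist μ ν := mul_le_mul_of_nonneg_left (le_blDist μ ν g hgb hglip) hC0
end
end
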